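/- Let A = L + D + Lᵀ be a real symmetric n×n matrix, where L is strictly lower triangular and D is diagonal with positive diagonal entries, and let D^{−1/2} be the diagonal matrix with entries (D_ii)^{−1/2}. Let μ := λ_min(D^{−1/2}(L + Lᵀ)D^{−1/2}) + 1, where λ_min is the least element of the real spectrum of the symmetric matrix D^{−1/2}(L + Lᵀ)D^{−1/2}. For ω ∈ ℝ with ω ≠ 0 and ω ≠ 2, let M(ω) := ω⁻¹(2−ω)⁻¹ (D + ωL) D⁻¹ (D + ωLᵀ), N(ω) := M(ω) − A, H(ω) := M(ω)⁻¹N(ω), and for even ℓ ≥ 2 let C^(ℓ)(ω) := ∑_{i=0}^{ℓ−1} H(ω)ⁱ M(ω)⁻¹. If μ ≥ 1/2 and 0 < ω < 2, then C^(ℓ)(ω) is symmetric positive definite. -/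

import Mathlib

open Matrix

/-- A real symmetric matrix is positive definite: `vᵀPv > 0` for all nonzero `v`. -/
def Matrix.IsPD {n : ℕ} (P : Matrix (Fin n) (Fin n) ℝ) : Prop :=
  Pᵀ = P ∧ ∀ v : Fin n → ℝ, v ≠ 0 → 0 < v ⬝ᵥ (P *ᵥ v)

/-- The diagonal matrix `D^{-1/2}` with entries `(D_ii)^{-1/2}`. -/
noncomputable def dhalf {n : ℕ} (D : Matrix (Fin n) (Fin n) ℝ) :
    Matrix (Fin n) (Fin n) ℝ :=
  Matrix.diagonal fun i => (Real.sqrt (D i i))⁻¹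

/-- The SSOR splitting matrix `M(ω) = ω⁻¹(2-ω)⁻¹ (D + ωL) D⁻¹ (D + ωLᵀ)`. -/
noncomputable def ssorM {n : ℕ} (L D : Matrix (Fin n) (Fin n) ℝ) (ω : ℝ) :
    Matrix (Fin n) (Fin n) ℝ :=
  (ω⁻¹ * (2 - ω)⁻¹) • ((D + ω • L) * D⁻¹ * (D + ω • Lᵀ))

/-- The SSOR inner-iteration preconditioning matrix
`C^(ℓ)(ω) = ∑_{i=0}^{ℓ-1} H(ω)ⁱ M(ω)⁻¹`, where `A = L + D + Lᵀ`,
`N(ω) = M(ω) - A` and `H(ω) = M(ω)⁻¹ N(ω)`. -/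
noncomputable def ssorC {n : ℕ} (L D : Matrix (Fin n) (Fin n) ℝ) (ω : ℝ) (ℓ : ℕ) :
    Matrix (Fin n) (Fin n) ℝ :=
  (∑ i ∈ Finset.range ℓ,
      ((ssorM L D ω)⁻¹ * (ssorM L D ω - (L + D + Lᵀ))) ^ i) * (ssorM L D ω)⁻¹

section aux
variable {n : ℕ}

lemma posSemidef_conj {A : Matrix (Fin n) (Fin n) ℝ} (hA : A.PosSemidef)
    (B : Matrix (Fin n) (Fin n) ℝ) : (B * A * Bᵀ).PosSemidef := by
  simpa [conjTranspose_eq_transpose_of_trivial] using hA.mul_mul_conjTranspose_same B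

lemma posDef_smul {A : Matrix (Fin n) (Fin n) ℝ} {c : ℝ} (hc : 0 < c) (hA : A.PosDef) :
    (c • A).PosDef := by
  have hAt : Aᵀ = A := by
    simpa [conjTranspose_eq_transpose_of_trivial] using hA.isHermitian.eq
  refine posDef_iff_dotProduct_mulVec.mpr ⟨?_, fun x hx => ?_⟩
  · unfold Matrix.IsHermitian
    simp [conjTranspose_eq_transpose_of_trivial, transpose_smul, hAt]
  · rw [smul_mulVec, dotProduct_smul, smul_eq_mul]
    exact mul_pos hc (hA.dotProduct_mulVec_pos hx)

lemma posSemidef_smul {A : Matrix (Fin n) (Fin n) ℝ} {c : ℝ} (hc : 0 ≤ c) (hA : A.PosSemidef) :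
    (c • A).PosSemidef := by
  have hAt : Aᵀ = A := by
    simpa [conjTranspose_eq_transpose_of_trivial] using hA.isHermitian.eq
  refine posSemidef_iff_dotProduct_mulVec.mpr ⟨?_, fun x => ?_⟩
  · unfold Matrix.IsHermitian
    simp [conjTranspose_eq_transpose_of_trivial, transpose_smul, hAt]
  · rw [smul_mulVec, dotProduct_smul, smul_eq_mul]
    exact mul_nonneg hc (hA.dotProduct_mulVec_nonneg x)

lemma posDef_conj {A B : Matrix (Fin n) (Fin n) ℝ} (hA : A.PosDef) (hB : IsUnit B.det) :
    (B * A * Bᵀ).PosDef := by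
  refine posDef_iff_dotProduct_mulVec.mpr ⟨(posSemidef_conj hA.posSemidef B).isHermitian, fun x hx => ?_⟩
  have hBu : IsUnit Bᵀ := (Matrix.isUnit_iff_isUnit_det _).2 (by rwa [det_transpose])
  have hx' : Bᵀ *ᵥ x ≠ 0 := by
    intro h
    exact hx ((Matrix.mulVec_injective_iff_isUnit.2 hBu) (by simpa using h))
  have h1 := hA.dotProduct_mulVec_pos hx'
  rw [star_trivial] at h1
  have h2 : x ⬝ᵥ (B * A * Bᵀ) *ᵥ x = (Bᵀ *ᵥ x) ⬝ᵥ A *ᵥ (Bᵀ *ᵥ x) := by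
    rw [Matrix.mul_assoc, ← mulVec_mulVec, ← mulVec_mulVec, dotProduct_mulVec,
      ← mulVec_transpose]
  simpa [star_trivial, h2] using h1

lemma posSemidef_sum {m : ℕ} (f : ℕ → Matrix (Fin n) (Fin n) ℝ)
    (hf : ∀ j ∈ Finset.range m, (f j).PosSemidef) :
    (∑ j ∈ Finset.range m, f j).PosSemidef := by
  classical
  refine Finset.sum_induction f _ (fun a b ha hb => ha.add hb) .zero hf

lemma spectrum_shift {A : Matrix (Fin n) (Fin n) ℝ} {c x : ℝ} :
    x ∈ spectrum ℝ (A + c • (1 : Matrix (Fin n) (Fin n) ℝ)) ↔ x - c ∈ spectrum ℝ A := by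
  rw [spectrum.mem_iff, spectrum.mem_iff]
  have : algebraMap ℝ (Matrix (Fin n) (Fin n) ℝ) x - (A + c • 1)
      = algebraMap ℝ (Matrix (Fin n) (Fin n) ℝ) (x - c) - A := by
    simp only [Algebra.algebraMap_eq_smul_one, sub_smul]
    abel
  rw [this]

end aux

theorem stmt_14 {n : ℕ} (L D : Matrix (Fin n) (Fin n) ℝ)
    (hL : ∀ i j : Fin n, i ≤ j → L i j = 0)
    (hD : D.IsDiag) (hDpos : ∀ i, 0 < D i i)
    -- `lmin` is the least element of the real spectrum of `D^{-1/2}(L + Lᵀ)D^{-1/2}`,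
    -- so that `μ = lmin + 1`
    (lmin : ℝ)
    (hmem : lmin ∈ spectrum ℝ (dhalf D * (L + Lᵀ) * dhalf D))
    (hmin : ∀ lam ∈ spectrum ℝ (dhalf D * (L + Lᵀ) * dhalf D), lmin ≤ lam)
    (ω : ℝ) (hω0 : ω ≠ 0) (hω2 : ω ≠ 2)
    (ℓ : ℕ) (heven : Even ℓ) (hℓ : 2 ≤ ℓ)
    (hmu : 1 / 2 ≤ lmin + 1) (hω : 0 < ω ∧ ω < 2) :
    (ssorC L D ω ℓ).IsPD := by
  obtain ⟨hω1, hω2'⟩ := hω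
  have hsub : (0:ℝ) < 2 - ω := by linarith
  -- basic facts about D
  have hDdiag : D = Matrix.diagonal D.diag := hD.diagonal_diag.symm
  have hDPD : D.PosDef := by
    rw [hDdiag]; exact Matrix.PosDef.diagonal hDpos
  have hDdet : IsUnit D.det := hDPD.det_pos.ne'.isUnit
  have hDinv : D * D⁻¹ = 1 := mul_nonsing_inv D hDdet
  have hDinv' : D⁻¹ * D = 1 := nonsing_inv_mul D hDdet
  have hDinvPD : D⁻¹.PosDef := hDPD.inv
  have hDt : Dᵀ = D := by rw [hDdiag]; exact Matrix.diagonal_transpose _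
  -- the square root of D
  set shalf : Matrix (Fin n) (Fin n) ℝ := Matrix.diagonal (fun i => Real.sqrt (D i i)) with hshalf
  have hsqrtpos : ∀ i, (0:ℝ) < Real.sqrt (D i i) := fun i => Real.sqrt_pos.2 (hDpos i)
  have hsd : shalf * dhalf D = 1 := by
    rw [hshalf]; unfold dhalf
    rw [Matrix.diagonal_mul_diagonal]
    convert Matrix.diagonal_one
    exact mul_inv_cancel₀ (hsqrtpos _).ne'
  have hds : dhalf D * shalf = 1 := by
    rw [hshalf]; unfold dhalf
    rw [Matrix.diagonal_mul_diagonal]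
    convert Matrix.diagonal_one
    exact inv_mul_cancel₀ (hsqrtpos _).ne'
  have hss : shalf * shalf = D := by
    have he : (fun i => Real.sqrt (D i i) * Real.sqrt (D i i)) = D.diag :=
      funext fun i => Real.mul_self_sqrt (hDpos i).le
    rw [hshalf, Matrix.diagonal_mul_diagonal, he, ← hDdiag]
  have hst : shalfᵀ = shalf := Matrix.diagonal_transpose _
  -- the matrix B and its shifted positive semidefiniteness
  set B : Matrix (Fin n) (Fin n) ℝ := dhalf D * (L + Lᵀ) * dhalf D with hB
  have hdht : (dhalf D)ᵀ = dhalf D := Matrix.diagonal_transpose _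
  have hBt : Bᵀ = B := by
    rw [hB, Matrix.transpose_mul, Matrix.transpose_mul, hdht, Matrix.transpose_add,
      Matrix.transpose_transpose, Matrix.mul_assoc]
    rw [add_comm Lᵀ L]
  have hBh : B.IsHermitian := by
    unfold Matrix.IsHermitian
    rw [conjTranspose_eq_transpose_of_trivial, hBt]
  have hQh : (B + (1/2:ℝ) • (1 : Matrix (Fin n) (Fin n) ℝ)).IsHermitian := by
    unfold Matrix.IsHermitian
    rw [conjTranspose_eq_transpose_of_trivial, Matrix.transpose_add, hBt, Matrix.transpose_smul,
      Matrix.transpose_one]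
  have hQpsd : (B + (1/2:ℝ) • (1 : Matrix (Fin n) (Fin n) ℝ)).PosSemidef := by
    refine hQh.posSemidef_iff_eigenvalues_nonneg.2 fun i => ?_
    have he := hQh.eigenvalues_mem_spectrum_real i
    have := hmin _ (spectrum_shift.1 he)
    rw [Pi.zero_apply]
    linarith
  -- X = L + Lᵀ + (1/2)D is positive semidefinite
  have hX : (L + Lᵀ + (1/2:ℝ) • D).PosSemidef := by
    have h0 := posSemidef_conj hQpsd shalf
    rw [hst] at h0
    have e1 : shalf * B * shalf = L + Lᵀ := by
      rw [hB]
      simp only [← Matrix.mul_assoc]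
      rw [hsd, Matrix.one_mul, Matrix.mul_assoc, hds, Matrix.mul_one]
    have e2 : shalf * (B + (1/2:ℝ) • 1) * shalf = L + Lᵀ + (1/2:ℝ) • D := by
      rw [Matrix.mul_add, Matrix.add_mul, e1, mul_smul_comm, smul_mul_assoc,
        Matrix.mul_one, hss]
    rwa [e2] at h0
  -- M is positive definite
  set M : Matrix (Fin n) (Fin n) ℝ := ssorM L D ω with hM
  set T : Matrix (Fin n) (Fin n) ℝ := D + ω • L with hT
  have hTt : Tᵀ = D + ω • Lᵀ := by
    rw [hT, Matrix.transpose_add, hDt, Matrix.transpose_smul]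
  have hTdet : IsUnit T.det := by
    have hdet : T.det = ∏ i, T i i := by
      apply Matrix.det_of_lowerTriangular
      intro i j hij
      have hij' : i < j := hij
      rw [hT]
      simp [Matrix.add_apply, Matrix.smul_apply, hD (ne_of_lt hij'), hL i j hij'.le]
    have hdiag : ∀ i, T i i = D i i := by
      intro i
      rw [hT]
      simp [Matrix.add_apply, Matrix.smul_apply, hL i i le_rfl]
    rw [hdet]
    refine (Finset.prod_pos fun i _ => ?_).ne'.isUnit
    rw [hdiag i]; exact hDpos i
  have hcpos : 0 < ω⁻¹ * (2 - ω)⁻¹ := mul_pos (inv_pos.2 hω1) (inv_pos.2 hsub)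
  have hMeq : M = (ω⁻¹ * (2 - ω)⁻¹) • (T * D⁻¹ * Tᵀ) := by
    rw [hM, hTt, hT]; rfl
  have hMPD : M.PosDef := by
    rw [hMeq]
    exact posDef_smul hcpos (posDef_conj hDinvPD hTdet)
  have hMt : Mᵀ = M := by
    simpa [conjTranspose_eq_transpose_of_trivial] using hMPD.isHermitian.eq
  have hMdet : IsUnit M.det := hMPD.det_pos.ne'.isUnit
  have hMM : M * M⁻¹ = 1 := mul_nonsing_inv M hMdet
  have hMM' : M⁻¹ * M = 1 := nonsing_inv_mul M hMdet
  have hMinvPD : M⁻¹.PosDef := hMPD.inv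
  have hMit : M⁻¹ᵀ = M⁻¹ := by rw [Matrix.transpose_nonsing_inv, hMt]
  -- expansion of M
  have hMexp : M = (ω⁻¹ * (2 - ω)⁻¹) •
      (D + ω • L + ω • Lᵀ + (ω * ω) • (L * D⁻¹ * Lᵀ)) := by
    rw [hMeq]
    congr 1
    rw [hTt, hT]
    simp only [Matrix.add_mul, Matrix.mul_add, smul_mul_assoc, mul_smul_comm,
      smul_add, ← Matrix.mul_assoc, hDinv, Matrix.one_mul, smul_smul]
    rw [Matrix.mul_assoc L D⁻¹ D, hDinv', Matrix.mul_one]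
    abel
  -- the key combination: 2M - A is positive definite
  have hcomb : (2:ℝ) • M - (L + D + Lᵀ) =
      (ω / (2 - ω)) • (L + Lᵀ + (1/2:ℝ) • D) + ((2 - ω) / (2 * ω)) • D
        + (2 * ω / (2 - ω)) • (L * D⁻¹ * Lᵀ) := by
    rw [hMexp]
    match_scalars <;> field_simp <;> ring
  have hGPD : ((2:ℝ) • M - (L + D + Lᵀ)).PosDef := by
    rw [hcomb]
    refine Matrix.PosDef.add_posSemidef
      (Matrix.PosDef.posSemidef_add
        (posSemidef_smul (by positivity) hX)
        (posDef_smul (by positivity) hDPD))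
      (posSemidef_smul (by positivity)
        (posSemidef_conj hDinvPD.posSemidef L))
  -- S = M⁻¹ (2M - A) M⁻¹ is positive definite
  set S : Matrix (Fin n) (Fin n) ℝ := M⁻¹ * ((2:ℝ) • M - (L + D + Lᵀ)) * M⁻¹ with hS
  have hSPD : S.PosDef := by
    have := posDef_conj hGPD hMinvPD.det_pos.ne'.isUnit
    rwa [hMit] at this
  have hSt : Sᵀ = S := by
    simpa [conjTranspose_eq_transpose_of_trivial] using hSPD.isHermitian.eq
  -- the iteration matrix H
  set N : Matrix (Fin n) (Fin n) ℝ := M - (L + D + Lᵀ) with hN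
  set H : Matrix (Fin n) (Fin n) ℝ := M⁻¹ * N with hH
  have hNt : Nᵀ = N := by
    rw [hN, Matrix.transpose_sub, hMt, Matrix.transpose_add, Matrix.transpose_add,
      Matrix.transpose_transpose, hDt]
    congr 1
    abel
  have hHt : Hᵀ = N * M⁻¹ := by
    rw [hH, Matrix.transpose_mul, hNt, hMit]
  have key1 : ∀ j : ℕ, M⁻¹ * (N * M⁻¹) ^ j = H ^ j * M⁻¹ := by
    intro j
    induction j with
    | zero => simp
    | succ k ih =>
      calc M⁻¹ * (N * M⁻¹) ^ (k + 1)
          = (M⁻¹ * N) * (M⁻¹ * (N * M⁻¹) ^ k) := by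
            rw [pow_succ']; simp only [Matrix.mul_assoc]
        _ = H * (H ^ k * M⁻¹) := by rw [ih, ← hH]
        _ = H ^ (k + 1) * M⁻¹ := by rw [pow_succ']; simp only [Matrix.mul_assoc]
  have hSform : S = (1 + H) * M⁻¹ := by
    rw [hS, hH]
    have : (2:ℝ) • M - (L + D + Lᵀ) = M + N := by rw [hN, two_smul]; abel
    rw [this, Matrix.mul_add, hMM', Matrix.add_mul, Matrix.one_mul]
  have key2 : ∀ j : ℕ, H ^ j * S * (H ^ j)ᵀ = (H ^ (2*j) + H ^ (2*j+1)) * M⁻¹ := by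
    intro j
    have e1 : H ^ j * H ^ j = H ^ (2*j) := by rw [← pow_add, two_mul]
    have e2 : H ^ j * H * H ^ j = H ^ (2*j+1) := by
      rw [← pow_succ, ← pow_add]; congr 1; omega
    rw [Matrix.transpose_pow, hHt, hSform]
    calc (H ^ j * ((1 + H) * M⁻¹)) * (N * M⁻¹) ^ j
        = H ^ j * (1 + H) * (M⁻¹ * (N * M⁻¹) ^ j) := by
          simp only [Matrix.mul_assoc]
      _ = H ^ j * (1 + H) * (H ^ j * M⁻¹) := by rw [key1]
      _ = (H ^ j * (1 + H) * H ^ j) * M⁻¹ := by simp only [Matrix.mul_assoc]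
      _ = (H ^ (2*j) + H ^ (2*j+1)) * M⁻¹ := by
          rw [mul_one_add, add_mul, e1, e2]
  have hpair : ∀ m : ℕ, ∑ i ∈ Finset.range (2*m), H ^ i
      = ∑ j ∈ Finset.range m, (H ^ (2*j) + H ^ (2*j+1)) := by
    intro m
    induction m with
    | zero => simp
    | succ k ih =>
      have h2 : 2*(k+1) = (2*k + 1) + 1 := by ring
      rw [h2, Finset.sum_range_succ, Finset.sum_range_succ, ih, Finset.sum_range_succ,
        add_assoc]
  obtain ⟨m, hm⟩ := heven
  have hm2 : ℓ = 2 * m := by omega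
  have hC : ssorC L D ω ℓ = ∑ j ∈ Finset.range m, H ^ j * S * (H ^ j)ᵀ := by
    unfold ssorC
    rw [← hM, ← hN, ← hH, hm2, hpair m, Finset.sum_mul]
    exact Finset.sum_congr rfl fun j _ => (key2 j).symm
  obtain ⟨m', rfl⟩ : ∃ m', m = m' + 1 := ⟨m - 1, by omega⟩
  have hCPD : (ssorC L D ω ℓ).PosDef := by
    rw [hC, Finset.sum_range_succ']
    refine Matrix.PosDef.posSemidef_add
      (_root_.posSemidef_sum _ fun j _ => posSemidef_conj hSPD.posSemidef _) ?_
    simpa using hSPD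
  refine ⟨?_, fun v hv => ?_⟩
  · simpa [conjTranspose_eq_transpose_of_trivial] using hCPD.isHermitian.eq
  · simpa [star_trivial] using hCPD.dotProduct_mulVec_pos hv
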